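/- For integers 0 ≤ n < A (A real), the function ψ(x) = e^{(n-A)x - e^{-x}/2} · L_n^{2(A-n)}(e^{-x}) satisfies the Schrödinger equation -ψ'' + U·ψ = -(A-n)²·ψ with the Morse potential U(x) = -(A + 1/2)e^{-x} + (1/4)e^{-2x}. -/

import Mathlib

/-- The generalized Laguerre polynomial L_m^α(x) = ∑_{k=0}^m (-1)^k/(k!(m-k)!) · (∏_{j=k+1}^m (α+j)) · x^k. -/
noncomputable def genLaguerre (m : ℕ) (α : ℝ) (x : ℝ) : ℝ :=
  ∑ k ∈ Finset.range (m + 1),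
    ((-1 : ℝ) ^ k / ((Nat.factorial k : ℝ) * (Nat.factorial (m - k) : ℝ)))
      * (∏ j ∈ Finset.Icc (k + 1) m, (α + (j : ℝ))) * x ^ k

open Finset

noncomputable def lagC (m : ℕ) (α : ℝ) (k : ℕ) : ℝ :=
  ((-1 : ℝ) ^ k / ((Nat.factorial k : ℝ) * (Nat.factorial (m - k) : ℝ)))
    * (∏ j ∈ Finset.Icc (k + 1) m, (α + (j : ℝ)))

lemma genLaguerre_eq (m : ℕ) (α x : ℝ) :
    genLaguerre m α x = ∑ k ∈ Finset.range (m + 1), lagC m α k * x ^ k := rfl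

noncomputable def lagD (m : ℕ) (α x : ℝ) : ℝ :=
  ∑ k ∈ Finset.range (m + 1), lagC m α k * k * x ^ (k - 1)

noncomputable def lagD2 (m : ℕ) (α x : ℝ) : ℝ :=
  ∑ k ∈ Finset.range (m + 1), lagC m α k * k * ((k:ℝ) - 1) * x ^ (k - 2)

lemma lagC_rec (m : ℕ) (α : ℝ) (k : ℕ) (hk : k < m) :
    lagC m α (k+1) * (k+1) * ((k:ℝ) + 1 + α) = -(((m:ℝ) - k) * lagC m α k) := by
  obtain ⟨a, rfl⟩ : ∃ a, m = k + 1 + a := ⟨m - (k+1), by omega⟩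
  have h1 : k + 1 + a - (k + 1) = a := by omega
  have h2 : k + 1 + a - k = a + 1 := by omega
  have hprod : (∏ j ∈ Finset.Icc (k + 1) (k+1+a), (α + (j : ℝ)))
      = (α + ((k:ℝ)+1)) * ∏ j ∈ Finset.Icc (k + 2) (k+1+a), (α + (j : ℝ)) := by
    rw [Finset.Icc_eq_cons_Ioc (by omega), Finset.prod_cons, ← Finset.Icc_add_one_left_eq_Ioc]
    push_cast; ring
  rw [lagC, lagC, h1, h2, hprod, Nat.factorial_succ (k), Nat.factorial_succ a]
  have hk0 : (Nat.factorial k : ℝ) ≠ 0 := by positivity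
  have ha0 : (Nat.factorial a : ℝ) ≠ 0 := by positivity
  push_cast
  field_simp
  ring

lemma hasDerivAt_genLaguerre (m : ℕ) (α x : ℝ) :
    HasDerivAt (genLaguerre m α) (lagD m α x) x := by
  have : HasDerivAt (fun y => ∑ k ∈ Finset.range (m + 1), lagC m α k * y ^ k)
      (lagD m α x) x := by
    apply HasDerivAt.fun_sum
    intro k _
    simpa [mul_assoc, mul_comm, mul_left_comm] using
      (hasDerivAt_pow k x).const_mul (lagC m α k)
  exact this.congr_of_eventuallyEq (by filter_upwards with y; rw [genLaguerre_eq])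

lemma hasDerivAt_lagD (m : ℕ) (α x : ℝ) :
    HasDerivAt (lagD m α) (lagD2 m α x) x := by
  apply HasDerivAt.fun_sum
  intro k _
  rcases k with _ | j
  · simpa using hasDerivAt_const x (0:ℝ)
  · have := (hasDerivAt_pow j x).const_mul (lagC m α (j+1) * ((j:ℝ)+1))
    have hexp : j + 1 - 2 = j - 1 := by omega
    simp only [Nat.add_sub_cancel, hexp]
    convert! this using 1
    · funext y; push_cast; ring
    · push_cast; ring

lemma laguerre_ode (m : ℕ) (α x : ℝ) :
    x * lagD2 m α x + (α + 1 - x) * lagD m α x + (m:ℝ) * genLaguerre m α x = 0 := by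
  have hA : x * lagD2 m α x + (α + 1) * lagD m α x
      = ∑ k ∈ Finset.range (m+1), lagC m α k * k * ((k:ℝ) + α) * x ^ (k-1) := by
    rw [lagD, lagD2, Finset.mul_sum, Finset.mul_sum, ← Finset.sum_add_distrib]
    apply Finset.sum_congr rfl
    intro k _
    rcases k with _ | _ | j
    · simp
    · push_cast; simp; ring
    · have e1 : j + 2 - 2 = j := rfl
      have e2 : j + 2 - 1 = j + 1 := rfl
      rw [e1, e2]
      push_cast
      ring
  have hB : (m:ℝ) * genLaguerre m α x - x * lagD m α x
      = ∑ k ∈ Finset.range (m+1), lagC m α k * ((m:ℝ) - k) * x ^ k := by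
    rw [lagD, genLaguerre_eq, Finset.mul_sum, Finset.mul_sum, ← Finset.sum_sub_distrib]
    apply Finset.sum_congr rfl
    intro k _
    rcases k with _ | j
    · push_cast; simp; ring
    · have e2 : j + 1 - 1 = j := rfl
      rw [e2]
      push_cast
      ring
  have key : (∑ k ∈ Finset.range (m+1), lagC m α k * k * ((k:ℝ) + α) * x ^ (k-1))
      + (∑ k ∈ Finset.range (m+1), lagC m α k * ((m:ℝ) - k) * x ^ k) = 0 := by
    rw [Finset.sum_range_succ' _ m, Finset.sum_range_succ _ m]
    have h0 : lagC m α 0 * ((0:ℕ):ℝ) * (((0:ℕ):ℝ) + α) * x ^ (0-1) = 0 := by simp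
    have hm : lagC m α m * ((m:ℝ) - (m:ℕ)) * x ^ m = 0 := by simp
    rw [h0, hm, add_zero, add_zero, ← Finset.sum_add_distrib]
    apply Finset.sum_eq_zero
    intro k hk
    have hkm : k < m := Finset.mem_range.mp hk
    have h := lagC_rec m α k hkm
    have e : k + 1 - 1 = k := rfl
    rw [e]
    push_cast
    linear_combination x ^ k * h
  linear_combination hA + hB + key

/-- for 0 ≤ n < A, the function ψ(x) = e^{(n-A)x - e^{-x}/2}·L_n^{2(A-n)}(e^{-x})
satisfies -ψ'' + U·ψ = -(A-n)²·ψ for the Morse potential U(x) = -(A+½)e^{-x} + ¼e^{-2x}. -/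
theorem morse_bound_states (n : ℕ) (A : ℝ) (hA : (n : ℝ) < A)
    (U ψ : ℝ → ℝ)
    (hU : U = fun x => -(A + 1/2) * Real.exp (-x) + (1/4) * Real.exp (-2 * x))
    (hψ : ψ = fun x => Real.exp (((n : ℝ) - A) * x - Real.exp (-x) / 2)
        * genLaguerre n (2 * (A - (n : ℝ))) (Real.exp (-x))) :
    ∀ x : ℝ, -(deriv (deriv ψ) x) + U x * ψ x = -((A - (n : ℝ)) ^ 2) * ψ x := by
  intro x
  set α : ℝ := 2 * (A - (n : ℝ)) with hα
  set s : ℝ := (n : ℝ) - A with hs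
  have ht : ∀ y : ℝ, HasDerivAt (fun z : ℝ => Real.exp (-z)) (-Real.exp (-y)) y := by
    intro y
    simpa using (hasDerivAt_id y).neg.exp
  have hg : ∀ y : ℝ, HasDerivAt (fun z : ℝ => s * z - Real.exp (-z) / 2)
      (s + Real.exp (-y) / 2) y := by
    intro y
    have h := ((hasDerivAt_id y).const_mul s).sub ((ht y).div_const 2)
    convert! h using 1 <;> ring
  have hL : ∀ y : ℝ, HasDerivAt (fun z : ℝ => genLaguerre n α (Real.exp (-z)))
      (lagD n α (Real.exp (-y)) * (-Real.exp (-y))) y := by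
    intro y
    simpa [Function.comp_def] using
      (hasDerivAt_genLaguerre n α (Real.exp (-y))).comp y (ht y)
  have hD : ∀ y : ℝ, HasDerivAt (fun z : ℝ => lagD n α (Real.exp (-z)))
      (lagD2 n α (Real.exp (-y)) * (-Real.exp (-y))) y := by
    intro y
    simpa [Function.comp_def] using
      (hasDerivAt_lagD n α (Real.exp (-y))).comp y (ht y)
  have H1 : ∀ y : ℝ, HasDerivAt ψ
      (Real.exp (s * y - Real.exp (-y) / 2) *
        ((s + Real.exp (-y) / 2) * genLaguerre n α (Real.exp (-y))
          - Real.exp (-y) * lagD n α (Real.exp (-y)))) y := by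
    intro y
    have h := (hg y).exp.mul (hL y)
    rw [hψ]
    convert! h using 1
    ring
  have hd1 : deriv ψ = fun y => Real.exp (s * y - Real.exp (-y) / 2) *
        ((s + Real.exp (-y) / 2) * genLaguerre n α (Real.exp (-y))
          - Real.exp (-y) * lagD n α (Real.exp (-y))) :=
    funext fun y => (H1 y).deriv
  have H2 : HasDerivAt (deriv ψ)
      (Real.exp (s * x - Real.exp (-x) / 2) *
        ((s + Real.exp (-x) / 2) ^ 2 * genLaguerre n α (Real.exp (-x))
          - Real.exp (-x) / 2 * genLaguerre n α (Real.exp (-x))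
          - Real.exp (-x) * (2 * s + Real.exp (-x) - 1) * lagD n α (Real.exp (-x))
          + Real.exp (-x) ^ 2 * lagD2 n α (Real.exp (-x)))) x := by
    rw [hd1]
    have hB : HasDerivAt (fun z : ℝ => (s + Real.exp (-z) / 2) * genLaguerre n α (Real.exp (-z))
          - Real.exp (-z) * lagD n α (Real.exp (-z)))
        ((-Real.exp (-x)) / 2 * genLaguerre n α (Real.exp (-x))
          + (s + Real.exp (-x) / 2) * (lagD n α (Real.exp (-x)) * (-Real.exp (-x)))
          - ((-Real.exp (-x)) * lagD n α (Real.exp (-x))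
            + Real.exp (-x) * (lagD2 n α (Real.exp (-x)) * (-Real.exp (-x))))) x :=
      ((((ht x).div_const 2).const_add s).mul (hL x)).sub ((ht x).mul (hD x))
    have h := (hg x).exp.mul hB
    convert! h using 1
    ring
  rw [H2.deriv]
  have ht2 : Real.exp (-2 * x) = Real.exp (-x) * Real.exp (-x) := by
    rw [← Real.exp_add]; ring_nf
  have ode := laguerre_ode n α (Real.exp (-x))
  simp only [hψ, hU, ht2]
  linear_combination (-(Real.exp (s * x - Real.exp (-x) / 2) * Real.exp (-x))) * ode
    + (Real.exp (s * x - Real.exp (-x) / 2) * Real.exp (-x)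
        * genLaguerre n α (Real.exp (-x))) * hα
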